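/- The elliptic curve E : y² = x³ - 9x² - 36x + 324 over ℚ has infinitely many rational points. -/

import Mathlib

/-- The doubling map on the curve y² = x³ - 9x² - 36x + 324. -/
noncomputable def dbl (p : ℚ × ℚ) : ℚ × ℚ :=
  (((3*p.1^2 - 18*p.1 - 36)/(2*p.2))^2 + 9 - 2*p.1,
   ((3*p.1^2 - 18*p.1 - 36)/(2*p.2)) *
     (p.1 - (((3*p.1^2 - 18*p.1 - 36)/(2*p.2))^2 + 9 - 2*p.1)) - p.2)

/-- Invariant: on the curve, with 2-adic valuations -2k and -3k. -/
def Good (k : ℤ) (p : ℚ × ℚ) : Prop :=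
  p.2^2 = p.1^3 - 9*p.1^2 - 36*p.1 + 324 ∧ p.1 ≠ 0 ∧ p.2 ≠ 0 ∧
    padicValRat 2 p.1 = -2*k ∧ padicValRat 2 p.2 = -3*k

lemma vadd {q r : ℚ} (hq : q ≠ 0) (hr : r ≠ 0)
    (h : padicValRat 2 q < padicValRat 2 r) :
    q + r ≠ 0 ∧ padicValRat 2 (q + r) = padicValRat 2 q := by
  have hne : q + r ≠ 0 := by
    intro h0
    have hq' : q = -r := by linarith [eq_neg_of_add_eq_zero_left h0]
    rw [hq', padicValRat.neg] at h
    exact lt_irrefl _ h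
  exact ⟨hne, padicValRat.add_eq_of_lt hne hq hr h⟩

lemma vtwo : padicValRat 2 (2:ℚ) = 1 := padicValRat.self (by norm_num)

lemma vodd (n : ℕ) (h : ¬ (2 ∣ n)) : padicValRat 2 (n:ℚ) = 0 := by
  rw [padicValRat.of_nat, padicValNat.eq_zero_of_not_dvd h, Nat.cast_zero]

lemma dbl_good {k : ℤ} {p : ℚ × ℚ} (hk : 1 ≤ k) (hp : Good k p) :
    Good (k + 1) (dbl p) := by
  obtain ⟨x, y⟩ := p
  obtain ⟨h, hx, hy, hvx, hvy⟩ := hp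
  simp only [Good] at *
  set N : ℚ := 3*x^2 - 18*x - 36 with hN
  set l : ℚ := N / (2*y) with hl
  set x' : ℚ := l^2 + 9 - 2*x with hx'
  set y' : ℚ := l*(x - x') - y with hy'
  have hdbl : dbl (x, y) = (x', y') := rfl
  rw [hdbl]
  -- numeric valuations
  have h2y : (2:ℚ)*y ≠ 0 := by positivity
  have v2y : padicValRat 2 (2*y) = 1 - 3*k := by
    rw [padicValRat.mul (by norm_num) hy, vtwo, hvy]; ring
  have v3 : padicValRat 2 (3:ℚ) = 0 := vodd 3 (by norm_num)
  have v9 : padicValRat 2 (9:ℚ) = 0 := vodd 9 (by norm_num)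
  have v18 : padicValRat 2 (18:ℚ) = 1 := by
    rw [show (18:ℚ) = 2 * 9 by norm_num, padicValRat.mul (by norm_num) (by norm_num),
      vtwo, v9]; norm_num
  have v36 : padicValRat 2 (36:ℚ) = 2 := by
    rw [show (36:ℚ) = 2 * (2 * 9) by norm_num,
      padicValRat.mul (by norm_num) (by norm_num),
      padicValRat.mul (by norm_num) (by norm_num), vtwo, v9]; norm_num
  -- valuation of N
  have va : padicValRat 2 (3*x^2) = -4*k := by
    rw [padicValRat.mul (by norm_num) (pow_ne_zero 2 hx), v3,
      padicValRat.pow x, hvx]; ring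
  have vb : padicValRat 2 (-(18*x)) = 1 - 2*k := by
    rw [padicValRat.neg, padicValRat.mul (by norm_num) hx, v18, hvx]; ring
  have hab := vadd (q := 3*x^2) (r := -(18*x)) (by positivity) (by simpa using hx)
    (by rw [va, vb]; linarith)
  have hNc := vadd (q := 3*x^2 + -(18*x)) (r := -(36:ℚ)) hab.1 (by norm_num)
    (by rw [hab.2, va, padicValRat.neg, v36]; linarith)
  have hNeq : N = 3*x^2 + -(18*x) + -(36:ℚ) := by rw [hN]; ring
  have hNne : N ≠ 0 := by rw [hNeq]; exact hNc.1
  have vN : padicValRat 2 N = -4*k := by rw [hNeq, hNc.2, hab.2, va]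
  -- valuation of l
  have hlne : l ≠ 0 := div_ne_zero hNne h2y
  have vl : padicValRat 2 l = -k - 1 := by
    rw [hl, padicValRat.div hNne h2y, vN, v2y]; ring
  have vl2 : padicValRat 2 (l^2) = -2*k - 2 := by
    rw [padicValRat.pow l, vl]; ring
  -- valuation of x'
  have h92x := vadd (q := -(2*x)) (r := (9:ℚ)) (by simpa using hx) (by norm_num)
    (by rw [padicValRat.neg, padicValRat.mul (by norm_num) hx, vtwo, hvx, v9]; linarith)
  have hx'c := vadd (q := l^2) (r := -(2*x) + 9) (pow_ne_zero 2 hlne) h92x.1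
    (by rw [vl2, h92x.2, padicValRat.neg, padicValRat.mul (by norm_num) hx, vtwo, hvx]; linarith)
  have hx'eq : x' = l^2 + (-(2*x) + 9) := by rw [hx']; ring
  have hx'ne : x' ≠ 0 := by rw [hx'eq]; exact hx'c.1
  have vx' : padicValRat 2 x' = -2*(k+1) := by rw [hx'eq, hx'c.2, vl2]; ring
  -- valuation of x - x'
  have hxx' := vadd (q := -x') (r := x) (by simpa using hx'ne) hx
    (by rw [padicValRat.neg, vx', hvx]; linarith)
  have hxx'ne : x - x' ≠ 0 := by
    intro h0; apply hxx'.1; rw [← h0]; ring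
  have vxx' : padicValRat 2 (x - x') = -2*k - 2 := by
    rw [show x - x' = -x' + x by ring, hxx'.2, padicValRat.neg, vx']; ring
  -- valuation of y'
  have hlxne : l * (x - x') ≠ 0 := mul_ne_zero hlne hxx'ne
  have vlx : padicValRat 2 (l * (x - x')) = -3*k - 3 := by
    rw [padicValRat.mul hlne hxx'ne, vl, vxx']; ring
  have hy'c := vadd (q := l*(x-x')) (r := -y) hlxne (by simpa using hy)
    (by rw [vlx, padicValRat.neg, hvy]; linarith)
  have hy'ne : y' ≠ 0 := by rw [hy', sub_eq_add_neg]; exact hy'c.1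
  have vy' : padicValRat 2 y' = -3*(k+1) := by
    rw [hy', sub_eq_add_neg, hy'c.2, vlx]; ring
  refine ⟨?_, hx'ne, hy'ne, vx', vy'⟩
  -- curve equation
  simp only [hy', hx', hl, hN]
  field_simp
  linear_combination 64*y^6*h

theorem elliptic_curve_infinitely_many_points :
    {p : ℚ × ℚ | p.2^2 = p.1^3 - 9*p.1^2 - 36*p.1 + 324}.Infinite := by
  set P : ℕ → ℚ × ℚ := fun n => dbl^[n] (265/16, -2717/64) with hP
  have hgood : ∀ n : ℕ, Good (n + 2) (P n) := by
    intro n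
    induction n with
    | zero =>
      have hP0 : P 0 = ((265:ℚ)/16, -(2717/64)) := by norm_num [hP]
      rw [hP0]
      refine ⟨by norm_num, by norm_num, by norm_num, ?_, ?_⟩
      · show padicValRat 2 ((265:ℚ)/16) = -2*((0:ℕ)+2)
        rw [show ((265:ℚ)/16) = ((265:ℕ):ℚ)/((2:ℚ)^4) by norm_num,
          padicValRat.div (by norm_num) (by norm_num), vodd 265 (by norm_num),
          padicValRat.pow (2:ℚ), vtwo]
        norm_num
      · show padicValRat 2 (-(2717/64):ℚ) = -3*((0:ℕ)+2)
        rw [show (-(2717/64):ℚ) = -(((2717:ℕ):ℚ)/((2:ℚ)^6)) by norm_num,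
          padicValRat.neg, padicValRat.div (by norm_num) (by norm_num),
          vodd 2717 (by norm_num), padicValRat.pow (2:ℚ), vtwo]
        norm_num
    | succ n ih =>
      have : P (n+1) = dbl (P n) := by
        rw [hP]; exact Function.iterate_succ_apply' dbl n _
      rw [this, show (((n:ℕ)+1:ℕ):ℤ)+2 = ((n:ℤ)+2)+1 by push_cast; ring]
      exact dbl_good (by omega) ih
  apply Set.infinite_of_injective_forall_mem (f := P)
  case hi =>
    intro m n hmn
    have hm := (hgood m).2.2.2.1
    have hn := (hgood n).2.2.2.1
    rw [hmn, hn] at hm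
    omega
  case hf =>
    intro n
    exact (hgood n).1
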